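/- Let X be a proper metric space, ρ : C₀(X) → B(H) a nondegenerate representation, and Y ⊆ X a closed subset with inclusion isometry V : H_Y → H. If T ∈ B(H_Y) is locally compact and has finite propagation with respect to the induced representation ρ_Y : C₀(Y) → B(H_Y), then Ad(V)(T) = V T V* ∈ B(H) is locally compact and has finite propagation with respect to ρ; moreover, if T is a compact operator then V T V* is a compact operator. -/

import Mathlib

open scoped ZeroAtInfty
open ContinuousLinearMap

/-- For a representation `ρ : C₀(X) → B(H)` and a subset `Y ⊆ X`, the subspace `H_{I(Y)}`:
the closure of the linear span of `{ρ(f)v : f ∈ I(Y), v ∈ H}`, where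
`I(Y) = {f ∈ C₀(X) : f(y) = 0 for all y ∈ Y}`. -/
noncomputable def HI {X H : Type*} [MetricSpace X]
    [NormedAddCommGroup H] [InnerProductSpace ℂ H] [CompleteSpace H]
    (ρ : C₀(X, ℂ) →⋆ₙₐ[ℂ] (H →L[ℂ] H)) (Y : Set X) : Submodule ℂ H :=
  (Submodule.span ℂ
    {w : H | ∃ f : C₀(X, ℂ), (∀ y ∈ Y, f y = 0) ∧ ∃ v : H, w = ρ f v}).topologicalClosure

/-- `H_Y = H_{I(Y)}ᗮ` is a closed subspace of `H`, hence itself a Hilbert space. -/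
instance {X H : Type*} [MetricSpace X]
    [NormedAddCommGroup H] [InnerProductSpace ℂ H] [CompleteSpace H]
    (ρ : C₀(X, ℂ) →⋆ₙₐ[ℂ] (H →L[ℂ] H)) (Y : Set X) :
    CompleteSpace ↥(HI ρ Y)ᗮ :=
  (HI ρ Y).isClosed_orthogonal.completeSpace_coe

instance {X H : Type*} [MetricSpace X]
    [NormedAddCommGroup H] [InnerProductSpace ℂ H] [CompleteSpace H]
    (ρ : C₀(X, ℂ) →⋆ₙₐ[ℂ] (H →L[ℂ] H)) (Y : Set X) :
    Submodule.HasOrthogonalProjection (HI ρ Y)ᗮ := by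
  haveI : CompleteSpace (HI ρ Y) :=
    (Submodule.isClosed_topologicalClosure _).completeSpace_coe
  infer_instance

/-- A representation `ρ : C₀(X) → B(H)` is nondegenerate if the closed linear span of
`{ρ(f)v : f ∈ C₀(X), v ∈ H}` equals `H`. -/
def Nondegenerate {X H : Type*} [MetricSpace X]
    [NormedAddCommGroup H] [InnerProductSpace ℂ H] [CompleteSpace H]
    (ρ : C₀(X, ℂ) →⋆ₙₐ[ℂ] (H →L[ℂ] H)) : Prop :=
  (Submodule.span ℂ {w : H | ∃ f : C₀(X, ℂ), ∃ v : H, w = ρ f v}).topologicalClosure = ⊤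

/-- An operator `T ∈ B(H)` is locally compact with respect to `ρ` if `ρ(f)T` and `Tρ(f)` are
compact operators for every `f ∈ C₀(X)`. -/
def LocallyCompactOp {X H : Type*} [MetricSpace X]
    [NormedAddCommGroup H] [InnerProductSpace ℂ H] [CompleteSpace H]
    (ρ : C₀(X, ℂ) →⋆ₙₐ[ℂ] (H →L[ℂ] H)) (T : H →L[ℂ] H) : Prop :=
  ∀ f : C₀(X, ℂ), IsCompactOperator ⇑(ρ f ∘L T) ∧ IsCompactOperator ⇑(T ∘L ρ f)

/-- An operator `T ∈ B(H)` has finite propagation with respect to `ρ` if there exists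
`R > 0` such that `ρ(f) T ρ(g) = 0` for all `f, g ∈ C₀(X)` with `d(x, y) > R` for every
`x ∈ supp f` and `y ∈ supp g`. -/
def FinitePropagation {X H : Type*} [MetricSpace X]
    [NormedAddCommGroup H] [InnerProductSpace ℂ H] [CompleteSpace H]
    (ρ : C₀(X, ℂ) →⋆ₙₐ[ℂ] (H →L[ℂ] H)) (T : H →L[ℂ] H) : Prop :=
  ∃ R > (0 : ℝ), ∀ f g : C₀(X, ℂ),
    (∀ x ∈ Function.support ⇑f, ∀ y ∈ Function.support ⇑g, R < dist x y) →
    ρ f ∘L T ∘L ρ g = 0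

/-- Let `X` be a proper metric space, `ρ : C₀(X) → B(H)` a nondegenerate
representation, and `Y ⊆ X` a closed subset with inclusion isometry `V : H_Y → H`. If
`T ∈ B(H_Y)` is locally compact and has finite propagation with respect to the induced
representation `ρ_Y : C₀(Y) → B(H_Y)`, then `Ad(V)(T) = V T V* ∈ B(H)` is locally compact and
has finite propagation with respect to `ρ`; moreover, if `T` is a compact operator then
`V T V*` is a compact operator. (Here `V = ((HI ρ Y)ᗮ).subtypeL` is the inclusion and its
adjoint `V*` is the orthogonal projection of `H` onto `H_Y`.) -/
theorem adV_locally_compact_finite_propagation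
    (X : Type*) [MetricSpace X] [ProperSpace X]
    (H : Type*) [NormedAddCommGroup H] [InnerProductSpace ℂ H] [CompleteSpace H]
    (ρ : C₀(X, ℂ) →⋆ₙₐ[ℂ] (H →L[ℂ] H)) (hρ : Nondegenerate ρ)
    (Y : Set X) (hY : IsClosed Y)
    (ρY : C₀(↥Y, ℂ) →⋆ₙₐ[ℂ] (↥(HI ρ Y)ᗮ →L[ℂ] ↥(HI ρ Y)ᗮ))
    (hcompat : ∀ (f : C₀(↥Y, ℂ)) (a : C₀(X, ℂ)), (∀ y : Y, f y = a y) →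
      ∀ v : ↥(HI ρ Y)ᗮ, (ρY f v : H) = ρ a ↑v)
    (T : ↥(HI ρ Y)ᗮ →L[ℂ] ↥(HI ρ Y)ᗮ)
    (hlc : LocallyCompactOp ρY T) (hfp : FinitePropagation ρY T) :
    LocallyCompactOp ρ
        (((HI ρ Y)ᗮ).subtypeL ∘L T ∘L Submodule.orthogonalProjection (HI ρ Y)ᗮ) ∧
    FinitePropagation ρ
        (((HI ρ Y)ᗮ).subtypeL ∘L T ∘L Submodule.orthogonalProjection (HI ρ Y)ᗮ) ∧
    (IsCompactOperator ⇑T →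
      IsCompactOperator
        ⇑(((HI ρ Y)ᗮ).subtypeL ∘L T ∘L Submodule.orthogonalProjection (HI ρ Y)ᗮ)) := by
  classical
  let ι : CocompactMap Y X :=
    ⟨⟨Subtype.val, continuous_subtype_val⟩,
      hY.isClosedEmbedding_subtypeVal.tendsto_cocompact⟩
  let r : C₀(X, ℂ) → C₀(↥Y, ℂ) := fun a => a.comp ι
  have key : ∀ (a : C₀(X, ℂ)) (v : ↥(HI ρ Y)ᗮ), (ρY (r a) v : H) = ρ a ↑v :=
    fun a v => hcompat (r a) a (fun y => rfl) v
  haveI : CompleteSpace (HI ρ Y) :=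
    (Submodule.isClosed_topologicalClosure _).completeSpace_coe
  have hinv : ∀ (a : C₀(X, ℂ)) (w : H), w ∈ HI ρ Y → ρ a w ∈ HI ρ Y := by
    intro a
    have h1 : Submodule.span ℂ
        {w : H | ∃ f : C₀(X, ℂ), (∀ y ∈ Y, f y = 0) ∧ ∃ v : H, w = ρ f v} ≤
        Submodule.comap (ρ a : H →ₗ[ℂ] H) (HI ρ Y) := by
      rw [Submodule.span_le]
      rintro w ⟨f, hf, v, rfl⟩
      refine Submodule.le_topologicalClosure _ (Submodule.subset_span ?_)
      exact ⟨a * f, fun y hy => by simp [hf y hy], v, by rw [map_mul]; rfl⟩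
    have h2 : HI ρ Y ≤ Submodule.comap (ρ a : H →ₗ[ℂ] H) (HI ρ Y) := by
      refine Submodule.topologicalClosure_minimal _ h1 ?_
      show IsClosed ((ρ a) ⁻¹' (HI ρ Y : Set H))
      exact (Submodule.isClosed_topologicalClosure _).preimage (ρ a).continuous
    intro w hw
    exact h2 hw
  have horth : (HI ρ Y)ᗮᗮ = HI ρ Y := Submodule.orthogonal_orthogonal _
  have projB : ∀ (a : C₀(X, ℂ)),
      Submodule.orthogonalProjection (HI ρ Y)ᗮ ∘L ρ a = ρY (r a) ∘L Submodule.orthogonalProjection (HI ρ Y)ᗮ := by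
    intro a
    ext w
    show (Submodule.orthogonalProjection (HI ρ Y)ᗮ (ρ a w) : H)
      = ↑(ρY (r a) (Submodule.orthogonalProjection (HI ρ Y)ᗮ w))
    refine Submodule.eq_starProjection_of_mem_orthogonal (Subtype.mem _) ?_
    rw [horth]
    have h1 : w - ↑(Submodule.orthogonalProjection (HI ρ Y)ᗮ w) ∈ HI ρ Y := by
      have := Submodule.sub_starProjection_mem_orthogonal (K := (HI ρ Y)ᗮ) w
      rwa [horth] at this
    have h2 : ρ a w - ↑(ρY (r a) (Submodule.orthogonalProjection (HI ρ Y)ᗮ w))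
        = ρ a (w - ↑(Submodule.orthogonalProjection (HI ρ Y)ᗮ w)) := by
      rw [key, map_sub]
    rw [h2]
    exact hinv a _ h1
  have projA : ∀ (a : C₀(X, ℂ)),
      ρ a ∘L ((HI ρ Y)ᗮ).subtypeL = ((HI ρ Y)ᗮ).subtypeL ∘L ρY (r a) := by
    intro a; ext v; exact (key a v).symm
  refine ⟨?_, ?_, ?_⟩
  · intro f
    constructor
    · have heq : ρ f ∘L (((HI ρ Y)ᗮ).subtypeL ∘L T ∘L Submodule.orthogonalProjection (HI ρ Y)ᗮ)
          = ((HI ρ Y)ᗮ).subtypeL ∘L ((ρY (r f) ∘L T) ∘L Submodule.orthogonalProjection (HI ρ Y)ᗮ) := by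
        rw [← ContinuousLinearMap.comp_assoc, projA]
        simp [ContinuousLinearMap.comp_assoc]
      rw [heq]
      simp only [ContinuousLinearMap.coe_comp']
      exact ((hlc (r f)).1.comp_clm (Submodule.orthogonalProjection (HI ρ Y)ᗮ)).clm_comp ((HI ρ Y)ᗮ).subtypeL
    · have heq : (((HI ρ Y)ᗮ).subtypeL ∘L T ∘L Submodule.orthogonalProjection (HI ρ Y)ᗮ) ∘L ρ f
          = ((HI ρ Y)ᗮ).subtypeL ∘L ((T ∘L ρY (r f)) ∘L Submodule.orthogonalProjection (HI ρ Y)ᗮ) := by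
        simp only [ContinuousLinearMap.comp_assoc]
        rw [projB]
      rw [heq]
      simp only [ContinuousLinearMap.coe_comp']
      exact ((hlc (r f)).2.comp_clm (Submodule.orthogonalProjection (HI ρ Y)ᗮ)).clm_comp ((HI ρ Y)ᗮ).subtypeL
  · obtain ⟨R, hR, hprop⟩ := hfp
    refine ⟨R, hR, fun f g hfg => ?_⟩
    have hsep : ∀ x ∈ Function.support ⇑(r f), ∀ y ∈ Function.support ⇑(r g),
        R < dist x y := by
      intro x hx y hy
      have := hfg x hx y hy
      rwa [Subtype.dist_eq]
    have h0 : ρY (r f) ∘L T ∘L ρY (r g) = 0 := hprop (r f) (r g) hsep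
    have heq : ρ f ∘L (((HI ρ Y)ᗮ).subtypeL ∘L T ∘L Submodule.orthogonalProjection (HI ρ Y)ᗮ) ∘L ρ g
        = ((HI ρ Y)ᗮ).subtypeL ∘L ((ρY (r f) ∘L T ∘L ρY (r g)) ∘L Submodule.orthogonalProjection (HI ρ Y)ᗮ) := by
      simp only [ContinuousLinearMap.comp_assoc]
      rw [projB g]
      rw [← ContinuousLinearMap.comp_assoc (ρ f)]
      rw [projA f]
      simp only [ContinuousLinearMap.comp_assoc]
    rw [heq, h0]
    ext w
    simp
  · intro hT
    simp only [ContinuousLinearMap.coe_comp']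
    exact (hT.comp_clm (Submodule.orthogonalProjection (HI ρ Y)ᗮ)).clm_comp ((HI ρ Y)ᗮ).subtypeL
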